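/- Define t⁺(θ, ε) = sin θ + √(sin²θ + ε cos θ − ε²) on the set of (θ, ε) where sin²θ + ε cos θ − ε² ≥ 0. Then for every θ ∈ (0, π/2), the function ε ↦ t⁺(θ, ε) is differentiable at ε = 0 with ∂_ε t⁺(θ, 0) = 1/(2 tan θ); moreover ∂_ε t⁺(θ, 0) → +∞ as θ → 0⁺, so the partial derivative ∂_ε t⁺(·, 0) is unbounded on every interval (0, θ₀) and t⁺ admits no C¹ extension to any neighborhood of (0,0) in ℝ². -/

import Mathlib

open Real Filter

/-- For t⁺(θ,ε) = sin θ + √(sin²θ + ε cos θ − ε²), for every θ ∈ (0, π/2)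
the map ε ↦ t⁺(θ,ε) is differentiable at 0 with derivative 1/(2 tan θ); this derivative
tends to +∞ as θ → 0⁺, is unbounded on every interval (0, θ₀), and t⁺ admits no C¹
extension to any neighborhood of (0,0). -/
theorem stmt_13 :
    (∀ θ : ℝ, θ ∈ Set.Ioo 0 (π / 2) →
      HasDerivAt (fun ε : ℝ => sin θ + Real.sqrt (sin θ ^ 2 + ε * cos θ - ε ^ 2))
        (1 / (2 * tan θ)) 0) ∧
    Tendsto (fun θ : ℝ => 1 / (2 * tan θ)) (nhdsWithin 0 (Set.Ioi 0)) atTop ∧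
    (∀ θ₀ : ℝ, 0 < θ₀ → ¬ BddAbove ((fun θ : ℝ => 1 / (2 * tan θ)) '' Set.Ioo 0 θ₀)) ∧
    ¬ ∃ (U : Set (ℝ × ℝ)) (g : ℝ × ℝ → ℝ), IsOpen U ∧ ((0 : ℝ), (0 : ℝ)) ∈ U ∧
      ContDiffOn ℝ 1 g U ∧
      ∀ p ∈ U, 0 ≤ sin p.1 ^ 2 + p.2 * cos p.1 - p.2 ^ 2 →
        g p = sin p.1 + Real.sqrt (sin p.1 ^ 2 + p.2 * cos p.1 - p.2 ^ 2) := by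
  have h2 : Tendsto (fun θ : ℝ => 1 / (2 * tan θ)) (nhdsWithin 0 (Set.Ioi 0)) atTop := by
    have hc : Tendsto (fun θ : ℝ => 2 * tan θ) (nhdsWithin 0 (Set.Ioi 0))
        (nhdsWithin 0 (Set.Ioi 0)) := by
      rw [tendsto_nhdsWithin_iff]
      constructor
      · have h0 : ContinuousAt Real.tan 0 := Real.continuousAt_tan.2 (by simp)
        have h1 : Tendsto (fun θ : ℝ => 2 * tan θ) (nhds 0) (nhds (2 * tan 0)) :=
          (continuousAt_const.mul h0)
        simpa using h1.mono_left nhdsWithin_le_nhds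
      · filter_upwards [Ioo_mem_nhdsGT_of_mem
          (show (0:ℝ) ∈ Set.Ico (0:ℝ) (π/2) from ⟨le_refl 0, by linarith [Real.pi_pos]⟩)] with θ hθ
        exact mul_pos two_pos (Real.tan_pos_of_pos_of_lt_pi_div_two hθ.1 hθ.2)
    exact (tendsto_inv_nhdsGT_zero.comp hc).congr (fun x => (one_div _).symm)
  refine ⟨?_, h2, ?_, ?_⟩
  · intro θ hθ
    have hs : 0 < sin θ := Real.sin_pos_of_pos_of_lt_pi hθ.1
      (lt_trans hθ.2 (by linarith [Real.pi_pos]))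
    have hc : 0 < cos θ := Real.cos_pos_of_mem_Ioo ⟨by linarith [hθ.1, Real.pi_pos], hθ.2⟩
    have hinner : HasDerivAt (fun ε : ℝ => sin θ ^ 2 + ε * cos θ - ε ^ 2) (cos θ) 0 := by
      have h1 := ((hasDerivAt_id (0:ℝ)).mul_const (cos θ)).const_add (sin θ ^ 2)
      have h2 := h1.sub (hasDerivAt_pow 2 (0:ℝ))
      simp at h2
      exact h2
    have hne : sin θ ^ 2 + 0 * cos θ - 0 ^ 2 ≠ 0 := by
      have : (0:ℝ) < sin θ ^ 2 := by positivity
      nlinarith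
    have hsqrt := Real.hasDerivAt_sqrt hne
    have hcomp := hsqrt.comp 0 hinner
    have hfin := hcomp.const_add (sin θ)
    refine hfin.congr_deriv ?_
    rw [Real.tan_eq_sin_div_cos]
    rw [show sin θ ^ 2 + 0 * cos θ - 0 ^ 2 = sin θ ^ 2 by ring, Real.sqrt_sq hs.le]
    field_simp
  · intro θ₀ hθ₀ hbdd
    obtain ⟨M, hM⟩ := hbdd
    have hev : ∀ᶠ θ in nhdsWithin 0 (Set.Ioi 0), M + 1 ≤ 1 / (2 * tan θ) :=
      h2.eventually_ge_atTop (M + 1)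
    have hIoo : Set.Ioo (0:ℝ) θ₀ ∈ nhdsWithin 0 (Set.Ioi 0) :=
      Ioo_mem_nhdsGT_of_mem (Set.mem_Ico.2 ⟨le_refl 0, hθ₀⟩)
    obtain ⟨θ, hθ1, hθ2⟩ := (hev.and (eventually_of_mem hIoo (fun x hx => hx))).exists
    have := hM (Set.mem_image_of_mem _ hθ2)
    linarith
  · rintro ⟨U, g, hU, h0U, hg, hgeq⟩
    have hdiff : DifferentiableAt ℝ g ((0:ℝ), (0:ℝ)) :=
      ((hg.differentiableOn one_ne_zero).differentiableAt (hU.mem_nhds h0U))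
    have hcurve : DifferentiableAt ℝ (fun ε : ℝ => g (0, ε)) 0 :=
      hdiff.comp 0 ((differentiableAt_const (c := (0:ℝ))).prodMk differentiableAt_id)
    have hd : HasDerivAt (fun ε : ℝ => g (0, ε)) (deriv (fun ε : ℝ => g (0, ε)) 0) 0 :=
      hcurve.hasDerivAt
    have hslope : Tendsto (slope (fun ε : ℝ => g (0, ε)) 0)
        (nhdsWithin 0 (Set.Ioi 0)) (nhds (deriv (fun ε : ℝ => g (0, ε)) 0)) := by
      have := hasDerivAt_iff_tendsto_slope.1 hd
      exact this.mono_left (nhdsWithin_mono 0 (fun x hx => ne_of_gt hx))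
    -- eventually (0, ε) ∈ U
    have hUmem : ∀ᶠ ε : ℝ in nhdsWithin 0 (Set.Ioi 0), ((0:ℝ), ε) ∈ U := by
      have hcont : Continuous (fun ε : ℝ => ((0:ℝ), ε)) :=
        continuous_const.prodMk continuous_id
      have : (fun ε : ℝ => ((0:ℝ), ε)) ⁻¹' U ∈ nhds (0:ℝ) :=
        (hU.preimage hcont).mem_nhds (by simpa using h0U)
      exact eventually_of_mem (nhdsWithin_le_nhds this) (fun x hx => hx)
    have hg00 : g ((0:ℝ), (0:ℝ)) = 0 := by
      have := hgeq ((0:ℝ), (0:ℝ)) h0U (by norm_num)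
      simpa using this
    -- slope tends to atTop: contradiction
    have hatTop : Tendsto (slope (fun ε : ℝ => g (0, ε)) 0)
        (nhdsWithin 0 (Set.Ioi 0)) atTop := by
      apply tendsto_atTop_mono' _ (_ : (fun ε : ℝ => 1 / (2 * Real.sqrt ε)) ≤ᶠ[_] _)
      · -- 1/(2√ε) → atTop
        have hc : Tendsto (fun ε : ℝ => 2 * Real.sqrt ε) (nhdsWithin 0 (Set.Ioi 0))
            (nhdsWithin 0 (Set.Ioi 0)) := by
          rw [tendsto_nhdsWithin_iff]
          constructor
          · have h1 : Tendsto (fun ε : ℝ => 2 * Real.sqrt ε) (nhds 0)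
                (nhds (2 * Real.sqrt 0)) :=
              (continuous_const.mul Real.continuous_sqrt).tendsto 0
            simpa using h1.mono_left nhdsWithin_le_nhds
          · filter_upwards [self_mem_nhdsWithin] with ε (hε : (0:ℝ) < ε)
            have h : 0 < Real.sqrt ε := Real.sqrt_pos.2 hε
            exact Set.mem_Ioi.2 (by positivity)
        exact (tendsto_inv_nhdsGT_zero.comp hc).congr (fun x => (one_div _).symm)
      · have hIoo : Set.Ioo (0:ℝ) (1/2) ∈ nhdsWithin 0 (Set.Ioi 0) :=
          Ioo_mem_nhdsGT_of_mem (Set.mem_Ico.2 ⟨le_refl 0, by norm_num⟩)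
        filter_upwards [hUmem, eventually_of_mem hIoo (fun x hx => hx)] with ε hεU hεI
        have hε : 0 < ε := hεI.1
        have hε2 : ε < 1/2 := hεI.2
        have hgε : g ((0:ℝ), ε) = Real.sqrt (ε - ε ^ 2) := by
          have hin : (0:ℝ) ≤ sin (0:ℝ) ^ 2 + ε * cos (0:ℝ) - ε ^ 2 := by
            simp only [Real.sin_zero, Real.cos_zero]
            nlinarith
          have := hgeq ((0:ℝ), ε) hεU hin
          simpa using this
        have hslopeval : slope (fun ε : ℝ => g (0, ε)) 0 ε = Real.sqrt (ε - ε ^ 2) / ε := by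
          rw [slope_def_field]
          rw [hgε, hg00]
          ring_nf
        rw [hslopeval]
        -- 1/(2√ε) ≤ √(ε-ε²)/ε
        have hs : 0 < Real.sqrt ε := Real.sqrt_pos.2 hε
        have hsq : Real.sqrt ε ^ 2 = ε := Real.sq_sqrt hε.le
        have hA : Real.sqrt ε / 2 ≤ Real.sqrt (ε - ε ^ 2) := by
          have h4 : Real.sqrt (ε / 4) ≤ Real.sqrt (ε - ε ^ 2) :=
            Real.sqrt_le_sqrt (by nlinarith)
          have heq : Real.sqrt (ε / 4) = Real.sqrt ε / 2 := by
            rw [show ε / 4 = ε * (1/2)^2 by ring, Real.sqrt_mul hε.le,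
              Real.sqrt_sq (by norm_num : (0:ℝ) ≤ 1/2)]
            ring
          linarith [heq ▸ h4]
        rw [div_le_div_iff₀ (by positivity) hε]
        nlinarith [mul_le_mul_of_nonneg_right hA (by positivity : (0:ℝ) ≤ 2 * Real.sqrt ε)]
    exact not_tendsto_nhds_of_tendsto_atTop hatTop _ hslope
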